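/- Diagonalization of the neutral generator under the stick-breaking change of coordinates (Appendix B Lemma): Fix K ≥ 2 and θ ∈ ℝ^K with all θ_i > 0. Define T : (0,1)^{K-1} → ℝ^{K-1} by T(ξ)_i := ξ_i Π_{j<i}(1 − ξ_j). Let f be twice continuously differentiable on the interior of Δ_{K-1} and set f̃ := f ∘ T. Then for every ξ ∈ (0,1)^{K-1}: (L_0 f)(T(ξ)) = (1/2) Σ_{i=1}^{K-1} [ξ_i(1 − ξ_i) / Π_{k<i}(1 − ξ_k)] · ∂²f̃/∂ξ_i²(ξ) + (1/2) Σ_{i=1}^{K-1} [(θ_i − Θ_{i-1} ξ_i) / Π_{k<i}(1 − ξ_k)] · ∂f̃/∂ξ_i(ξ), where Θ_{i-1} := Σ_{l=i}^K θ_l. In particular, no mixed second-order partial derivatives appear in the transformed generator. -/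

import Mathlib

open MeasureTheory Filter

noncomputable section WrightFisher

/-- The modified Jacobi polynomial `R_n^{(a,b)}`. -/
def modJacobi (a b : ℝ) (n : ℕ) (x : ℝ) : ℝ :=
  ∑ s ∈ Finset.range (n + 1),
    (Real.Gamma ((n : ℝ) + b) / (Real.Gamma ((n : ℝ) - (s : ℝ) + 1) * Real.Gamma (b + (s : ℝ)))) *
      (Real.Gamma ((n : ℝ) + a) / (Real.Gamma ((s : ℝ) + 1) * Real.Gamma (a + (n : ℝ) - (s : ℝ)))) *
      (x - 1) ^ s * x ^ (n - s)

/-- The norming constant `c_n^{(a,b)}`. -/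
def cConst (a b : ℝ) (n : ℕ) : ℝ :=
  Real.Gamma ((n : ℝ) + a) * Real.Gamma ((n : ℝ) + b) /
    ((2 * (n : ℝ) + a + b - 1) * Real.Gamma ((n : ℝ) + a + b - 1) * Real.Gamma ((n : ℝ) + 1))

/-- Inclusion of `Fin (K-1)` into `Fin K`. -/
def idx (K : ℕ) (j : Fin (K - 1)) : Fin K := Fin.castLE (Nat.sub_le K 1) j

/-- `N_j = Σ_{i>j} n_i`. -/
def Nsum (K : ℕ) (n : Fin (K - 1) → ℕ) (j : Fin (K - 1)) : ℕ :=
  ∑ i ∈ Finset.univ.filter (fun i => j < i), n i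

/-- `Θ_j = Σ_{i=j+1}^{K} θ_i` (0-indexed: sum of `θ i` for `i > j`). -/
def Tsum (K : ℕ) (θ : Fin K → ℝ) (j : Fin (K - 1)) : ℝ :=
  ∑ i ∈ Finset.univ.filter (fun i : Fin K => (j : ℕ) < (i : ℕ)), θ i

/-- `Σ_{i<j} x_i`. -/
def partialSum (K : ℕ) (x : Fin (K - 1) → ℝ) (j : Fin (K - 1)) : ℝ :=
  ∑ i ∈ Finset.univ.filter (fun i => i < j), x i

/-- The multivariate Jacobi polynomial `P_n^θ`. -/
def JacobiP (K : ℕ) (θ : Fin K → ℝ) (n : Fin (K - 1) → ℕ) (x : Fin (K - 1) → ℝ) : ℝ :=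
  ∏ j : Fin (K - 1),
    (1 - x j / (1 - partialSum K x j)) ^ (Nsum K n j) *
      modJacobi (θ (idx K j)) (Tsum K θ j + 2 * (Nsum K n j : ℝ)) (n j)
        (x j / (1 - partialSum K x j))

/-- Extend `x ∈ ℝ^{K-1}` to all `K` allele frequencies, `x_K := 1 - Σ x_i`. -/
def extendFreq (K : ℕ) (x : Fin (K - 1) → ℝ) (i : Fin K) : ℝ :=
  if h : (i : ℕ) < K - 1 then x ⟨i, h⟩ else 1 - ∑ j, x j

/-- The unnormalized Dirichlet density `Π_0`. -/
def Pi0 (K : ℕ) (θ : Fin K → ℝ) (x : Fin (K - 1) → ℝ) : ℝ :=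
  ∏ i : Fin K, extendFreq K x i ^ (θ i - 1)

/-- The norming constant `C_n^θ`. -/
def CConst (K : ℕ) (θ : Fin K → ℝ) (n : Fin (K - 1) → ℕ) : ℝ :=
  ∏ j : Fin (K - 1), cConst (θ (idx K j)) (Tsum K θ j + 2 * (Nsum K n j : ℝ)) (n j)

/-- Interior of the simplex `Δ_{K-1}`. -/
def simplexInt (K : ℕ) : Set (Fin (K - 1) → ℝ) :=
  {x | (∀ i, 0 < x i) ∧ ∑ i, x i < 1}

/-- Open unit cube `(0,1)^{K-1}`. -/
def openCube (K : ℕ) : Set (Fin (K - 1) → ℝ) :=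
  {ξ | ∀ i, ξ i ∈ Set.Ioo (0 : ℝ) 1}

/-- The stick-breaking map `T(ξ)_i = ξ_i Π_{j<i}(1-ξ_j)`. -/
def stickBreak (K : ℕ) (ξ : Fin (K - 1) → ℝ) : Fin (K - 1) → ℝ :=
  fun i => ξ i * ∏ j ∈ Finset.univ.filter (fun j => j < i), (1 - ξ j)

/-- Inverse of the stick-breaking map, `S(x)_i = x_i / (1 - Σ_{j<i} x_j)`. -/
def stickBreakInv (K : ℕ) (x : Fin (K - 1) → ℝ) : Fin (K - 1) → ℝ :=
  fun i => x i / (1 - partialSum K x i)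

/-- Partial derivative `∂f/∂x_i`. -/
def pd (K : ℕ) (f : (Fin (K - 1) → ℝ) → ℝ) (i : Fin (K - 1)) (x : Fin (K - 1) → ℝ) : ℝ :=
  fderiv ℝ f x (Pi.single i 1)

/-- `|θ| = Σ θ_i`. -/
def thetaTot (K : ℕ) (θ : Fin K → ℝ) : ℝ := ∑ i, θ i

/-- The neutral Wright-Fisher generator `L_0`. -/
def L0 (K : ℕ) (θ : Fin K → ℝ) (f : (Fin (K - 1) → ℝ) → ℝ) (x : Fin (K - 1) → ℝ) : ℝ :=
  (1 / 2) * ∑ i, ∑ j, x i * ((if i = j then (1 : ℝ) else 0) - x j) * pd K (pd K f j) i x +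
    (1 / 2) * ∑ i, (θ (idx K i) - thetaTot K θ * x i) * pd K f i x

/-- Marginal fitness `σ_i(x)`. -/
def margFit (K : ℕ) (σ : Fin K → Fin K → ℝ) (x : Fin (K - 1) → ℝ) (i : Fin K) : ℝ :=
  ∑ j, σ i j * extendFreq K x j

/-- Mean fitness `σ̄(x)`. -/
def meanFit (K : ℕ) (σ : Fin K → Fin K → ℝ) (x : Fin (K - 1) → ℝ) : ℝ :=
  ∑ i, ∑ j, σ i j * extendFreq K x i * extendFreq K x j

/-- The selection part `L_σ` of the generator. -/
def Lsel (K : ℕ) (σ : Fin K → Fin K → ℝ) (f : (Fin (K - 1) → ℝ) → ℝ)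
    (x : Fin (K - 1) → ℝ) : ℝ :=
  ∑ i, x i * (margFit K σ x (idx K i) - meanFit K σ x) * pd K f i x

/-- The full generator `L = L_0 + L_σ`. -/
def Lfull (K : ℕ) (θ : Fin K → ℝ) (σ : Fin K → Fin K → ℝ) (f : (Fin (K - 1) → ℝ) → ℝ)
    (x : Fin (K - 1) → ℝ) : ℝ :=
  L0 K θ f x + Lsel K σ f x

/-- The polynomial `Q(x; σ, θ)`. -/
def Qpoly (K : ℕ) (θ : Fin K → ℝ) (σ : Fin K → Fin K → ℝ) (x : Fin (K - 1) → ℝ) : ℝ :=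
  (1 / 2) * (∑ i, extendFreq K x i * margFit K σ x i ^ 2
    + ∑ i, θ i * margFit K σ x i
    + ∑ i, extendFreq K x i * σ i i
    - (1 + thetaTot K θ) * meanFit K σ x
    - meanFit K σ x ^ 2)

/-- Neutral eigenvalue `λ^θ_{|n|} = |n|(|n|-1+|θ|)/2`. -/
def lamNeutral (K : ℕ) (θ : Fin K → ℝ) (n : Fin (K - 1) → ℕ) : ℝ :=
  (1 / 2) * (∑ j, (n j : ℝ)) * ((∑ j, (n j : ℝ)) - 1 + thetaTot K θ)

/-- Recurrence constants `G^{(a,b)}_{n,m}`. -/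
def Gc (a b : ℝ) (n m : ℕ) : ℝ :=
  if n = m + 1 then
    ((n : ℝ) + a - 1) * ((n : ℝ) + b - 1) /
      ((2 * (n : ℝ) + a + b - 1) * (2 * (n : ℝ) + a + b - 2))
  else if n = m then
    (if n = 0 then a / (a + b)
     else 1 / 2 - (b - a) * (a + b - 2) / (2 * (2 * (n : ℝ) + a + b) * (2 * (n : ℝ) + a + b - 2)))
  else if m = n + 1 then
    ((n : ℝ) + 1) * ((n : ℝ) + a + b - 1) / ((2 * (n : ℝ) + a + b) * (2 * (n : ℝ) + a + b - 1))
  else 0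

/-- Recurrence constants `H^{(a,b)}_{n,m}`. -/
def Hc (a b : ℝ) (n m : ℕ) : ℝ :=
  if m = n then
    ((n : ℝ) + a + b - 1) * ((n : ℝ) + a + b) /
      ((2 * (n : ℝ) + a + b - 1) * (2 * (n : ℝ) + a + b))
  else if n = m + 1 then
    (if n = 1 then -2 * a / (a + b + 2)
     else if 1 < n then
       -2 * ((n : ℝ) + a - 1) * ((n : ℝ) + a + b - 1) /
         ((2 * (n : ℝ) + a + b - 2) * (2 * (n : ℝ) + a + b))
     else 0)
  else if n = m + 2 then
    (if 1 < n then
       ((n : ℝ) + a - 2) * ((n : ℝ) + a - 1) /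
         ((2 * (n : ℝ) + a + b - 2) * (2 * (n : ℝ) + a + b - 1))
     else 0)
  else 0

/-- Recurrence constants `I^{(a,b)}_{n,m}`. -/
def Ic (a b : ℝ) (n m : ℕ) : ℝ :=
  if m = n + 1 then
    (if n = 0 then -1 / (a + b)
     else -(((n : ℝ) + 1) * ((n : ℝ) + a + b - 1)) /
       ((2 * (n : ℝ) + a + b - 1) * (2 * (n : ℝ) + a + b)))
  else if m = n then
    (if n = 0 then b / (a + b)
     else if n = 1 then (b ^ 2 + a * (b + 2)) / ((a + b) * (a + b + 2))
     else (b ^ 2 + 2 * (n : ℝ) * ((n : ℝ) + a - 1) + b * (2 * (n : ℝ) + a - 2)) /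
       ((2 * (n : ℝ) + a + b - 2) * (2 * (n : ℝ) + a + b)))
  else if n = m + 1 then
    (if n = 1 then -(a * b) / ((a + b) * (a + b + 1))
     else -(((n : ℝ) + a - 1) * ((n : ℝ) + b - 1)) /
       ((2 * (n : ℝ) + a + b - 2) * (2 * (n : ℝ) + a + b - 1)))
  else 0

/-- Recurrence constants `J^{(a,b)}_{n,m}`. -/
def Jc (a b : ℝ) (n m : ℕ) : ℝ :=
  if m = n then
    (if n = 0 then (b - 1) * (b - 2) / ((a + b - 1) * (a + b - 2))
     else ((n : ℝ) + b - 2) * ((n : ℝ) + b - 1) /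
       ((2 * (n : ℝ) + a + b - 2) * (2 * (n : ℝ) + a + b - 1)))
  else if m = n + 1 then
    -2 * ((n : ℝ) + 1) * ((n : ℝ) + b - 1) / ((2 * (n : ℝ) + a + b - 2) * (2 * (n : ℝ) + a + b))
  else if m = n + 2 then
    ((n : ℝ) + 1) * ((n : ℝ) + 2) / ((2 * (n : ℝ) + a + b - 1) * (2 * (n : ℝ) + a + b))
  else 0

/-- The index set `M_i(n)`. -/
def indexSet (K : ℕ) (i : Fin (K - 1)) (n : Fin (K - 1) → ℕ) : Set (Fin (K - 1) → ℕ) :=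
  {m | (∀ j, i < j → Nsum K m j = Nsum K n j) ∧
       (∀ j, j ≤ i → |(Nsum K m j : ℤ) - (Nsum K n j : ℤ)| ≤ 1)}

/-- The explicit recurrence coefficient `r^{(θ,i)}_{n,m}`. -/
def rCoeff (K : ℕ) (θ : Fin K → ℝ) (i : Fin (K - 1)) (n m : Fin (K - 1) → ℕ) : ℝ :=
  Gc (θ (idx K i)) (Tsum K θ i + 2 * (Nsum K n i : ℝ)) (n i) (m i) *
    ∏ j ∈ Finset.univ.filter (fun j => j < i),
      (if Nsum K m j = Nsum K n j + 1 then
         Hc (θ (idx K j)) (Tsum K θ j + 2 * (Nsum K n j : ℝ)) (n j) (m j)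
       else if Nsum K m j = Nsum K n j then
         Ic (θ (idx K j)) (Tsum K θ j + 2 * (Nsum K n j : ℝ)) (n j) (m j)
       else if Nsum K n j = Nsum K m j + 1 then
         Jc (θ (idx K j)) (Tsum K θ j + 2 * (Nsum K n j : ℝ)) (n j) (m j)
       else 0)

/-- `Θ_{i-1} = Σ_{l=i}^K θ_l` (0-indexed: sum of `θ l` for `l ≥ i`). -/
def ThetaGe (K : ℕ) (θ : Fin K → ℝ) (i : Fin (K - 1)) : ℝ :=
  ∑ l ∈ Finset.univ.filter (fun l : Fin K => (i : ℕ) ≤ (l : ℕ)), θ l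

end WrightFisher

noncomputable section StickBreakAux

open Finset

/-- `P_l = ∏_{j<l}(1-ξ_j)`. -/
def SBP (K : ℕ) (ξ : Fin (K - 1) → ℝ) (l : Fin (K - 1)) : ℝ :=
  ∏ j ∈ Finset.univ.filter (fun j => j < l), (1 - ξ j)

/-- Jacobian entry `∂T_l/∂ξ_i` of the stick-breaking map. -/
def Vm (K : ℕ) (ξ : Fin (K - 1) → ℝ) (i l : Fin (K - 1)) : ℝ :=
  if i = l then SBP K ξ l
  else if i < l then
    -(ξ l * ∏ j ∈ (Finset.univ.filter (fun j => j < l)).erase i, (1 - ξ j))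
  else 0

lemma clm_apply_eq_sum {m : ℕ} (L : (Fin m → ℝ) →L[ℝ] ℝ) (u : Fin m → ℝ) :
    L u = ∑ l, u l * L (Pi.single l 1) := by
  have h : u = ∑ l, u l • (Pi.single l 1 : Fin m → ℝ) := by
    ext j
    simp [Pi.single_apply]
  calc L u = L (∑ l, u l • (Pi.single l 1 : Fin m → ℝ)) := by rw [← h]
    _ = ∑ l, u l * L (Pi.single l 1) := by
        rw [map_sum]
        exact Finset.sum_congr rfl fun l _ => by rw [L.map_smul]; rfl

/-- Derivative of the stick-breaking map. -/
def Dmap (K : ℕ) (ζ : Fin (K - 1) → ℝ) : (Fin (K - 1) → ℝ) →L[ℝ] (Fin (K - 1) → ℝ) :=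
  ContinuousLinearMap.pi fun l =>
    ζ l • (∑ j ∈ Finset.univ.filter (fun j => j < l),
        (∏ k ∈ (Finset.univ.filter (fun j => j < l)).erase j, (1 - ζ k)) •
          (-(ContinuousLinearMap.proj j : (Fin (K - 1) → ℝ) →L[ℝ] ℝ)))
      + SBP K ζ l • (ContinuousLinearMap.proj l : (Fin (K - 1) → ℝ) →L[ℝ] ℝ)

lemma hasFDerivAt_stickBreak {K : ℕ} (ζ : Fin (K - 1) → ℝ) :
    HasFDerivAt (stickBreak K) (Dmap K ζ) ζ := by
  apply hasFDerivAt_pi''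
  intro l
  have h1 : HasFDerivAt (fun ζ : Fin (K - 1) → ℝ => ζ l)
      (ContinuousLinearMap.proj l : (Fin (K - 1) → ℝ) →L[ℝ] ℝ) ζ :=
    (ContinuousLinearMap.proj l : (Fin (K - 1) → ℝ) →L[ℝ] ℝ).hasFDerivAt
  have h2 : HasFDerivAt (fun ζ : Fin (K - 1) → ℝ =>
      ∏ j ∈ Finset.univ.filter (fun j => j < l), (1 - ζ j))
      (∑ j ∈ Finset.univ.filter (fun j => j < l),
        (∏ k ∈ (Finset.univ.filter (fun j => j < l)).erase j, (1 - ζ k)) •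
          (-(ContinuousLinearMap.proj j : (Fin (K - 1) → ℝ) →L[ℝ] ℝ))) ζ :=
    HasFDerivAt.finset_prod fun j _ => (hasFDerivAt_apply j ζ).const_sub 1
  have h3 := h1.mul h2
  have heq : ((ContinuousLinearMap.proj l).comp (Dmap K ζ) :
      (Fin (K - 1) → ℝ) →L[ℝ] ℝ)
      = ζ l • (∑ j ∈ Finset.univ.filter (fun j => j < l),
          (∏ k ∈ (Finset.univ.filter (fun j => j < l)).erase j, (1 - ζ k)) •
            (-(ContinuousLinearMap.proj j : (Fin (K - 1) → ℝ) →L[ℝ] ℝ)))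
        + (∏ j ∈ Finset.univ.filter (fun j => j < l), (1 - ζ j)) •
            (ContinuousLinearMap.proj l : (Fin (K - 1) → ℝ) →L[ℝ] ℝ) := by
    ext u
    simp [Dmap, SBP]
  rw [heq]
  exact h3

lemma Dmap_single {K : ℕ} (ζ : Fin (K - 1) → ℝ) (i l : Fin (K - 1)) :
    Dmap K ζ (Pi.single i 1) l = Vm K ζ i l := by
  classical
  simp only [Dmap, ContinuousLinearMap.pi_apply, ContinuousLinearMap.add_apply,
    ContinuousLinearMap.smul_apply, ContinuousLinearMap.sum_apply,
    ContinuousLinearMap.neg_apply, ContinuousLinearMap.proj_apply, smul_eq_mul]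
  have hsum : (∑ j ∈ Finset.univ.filter (fun j => j < l),
      (∏ k ∈ (Finset.univ.filter (fun j => j < l)).erase j, (1 - ζ k)) *
        (-((Pi.single i 1 : Fin (K-1) → ℝ) j)))
      = if i ∈ Finset.univ.filter (fun j => j < l) then
          -(∏ k ∈ (Finset.univ.filter (fun j => j < l)).erase i, (1 - ζ k)) else 0 := by
    rw [← Finset.sum_ite_eq' (Finset.univ.filter (fun j => j < l)) i
      (fun j => -(∏ k ∈ (Finset.univ.filter (fun j => j < l)).erase j, (1 - ζ k)))]
    refine Finset.sum_congr rfl fun j _ => ?_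
    by_cases hj : j = i <;> simp [hj, Pi.single_apply]
  rw [hsum]
  rcases eq_or_ne i l with rfl | hne
  · rw [Vm, if_pos rfl]
    simp [Pi.single_apply, SBP]
  · by_cases hlt : i < l
    · rw [Vm, if_neg hne, if_pos hlt]
      have hi : i ∈ Finset.univ.filter (fun j => j < l) := by simp [hlt]
      rw [if_pos hi]
      have h0 : (Pi.single i 1 : Fin (K - 1) → ℝ) l = 0 := by
        rw [Pi.single_apply, if_neg (fun h => hne h.symm)]
      rw [h0]
      ring
    · rw [Vm, if_neg hne, if_neg hlt]
      have hi : i ∉ Finset.univ.filter (fun j => j < l) := by simp [hlt]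
      rw [if_neg hi]
      have h0 : (Pi.single i 1 : Fin (K - 1) → ℝ) l = 0 := by
        rw [Pi.single_apply, if_neg (fun h => hne h.symm)]
      rw [h0]
      ring

lemma isOpen_simplexInt {K : ℕ} : IsOpen (simplexInt K) := by
  have h : simplexInt K =
      (⋂ i, {x : Fin (K - 1) → ℝ | 0 < x i}) ∩ {x : Fin (K - 1) → ℝ | ∑ i, x i < 1} := by
    ext x
    simp [simplexInt, Set.mem_iInter]
  rw [h]
  exact (isOpen_iInter_of_finite fun i =>
      isOpen_lt continuous_const (continuous_apply i)).inter
    (isOpen_lt (continuous_finset_sum _ fun i _ => continuous_apply i) continuous_const)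

lemma isOpen_openCube {K : ℕ} : IsOpen (openCube K) := by
  have h : openCube K = ⋂ i, (fun x : Fin (K - 1) → ℝ => x i) ⁻¹' Set.Ioo 0 1 := by
    ext x
    simp [openCube, Set.mem_iInter]
  rw [h]
  exact isOpen_iInter_of_finite fun i => isOpen_Ioo.preimage (continuous_apply i)

lemma one_sub_pos' {K : ℕ} {ξ : Fin (K - 1) → ℝ} (hξ : ξ ∈ openCube K) (i : Fin (K - 1)) :
    0 < 1 - ξ i := by
  have := (hξ i).2
  linarith

lemma SBP_pos {K : ℕ} {ξ : Fin (K - 1) → ℝ} (hξ : ξ ∈ openCube K) (l : Fin (K - 1)) :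
    0 < SBP K ξ l :=
  Finset.prod_pos fun j _ => one_sub_pos' hξ j

/-- `Q_m = ∏_{j.val < m}(1-ξ_j)`. -/
def Qm (K : ℕ) (ξ : Fin (K - 1) → ℝ) (m : ℕ) : ℝ :=
  ∏ j ∈ Finset.univ.filter (fun j : Fin (K - 1) => (j : ℕ) < m), (1 - ξ j)

lemma filter_coe_lt {K : ℕ} (l : Fin (K - 1)) :
    (Finset.univ.filter (fun j : Fin (K - 1) => (j : ℕ) < (l : ℕ)))
      = Finset.univ.filter (fun j => j < l) := by
  ext j
  simp only [Finset.mem_filter, Finset.mem_univ, true_and]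
  exact Fin.lt_def.symm

lemma SBP_eq_Qm {K : ℕ} (ξ : Fin (K - 1) → ℝ) (l : Fin (K - 1)) :
    SBP K ξ l = Qm K ξ (l : ℕ) := by
  rw [SBP, Qm, filter_coe_lt]

lemma Qm_pos {K : ℕ} {ξ : Fin (K - 1) → ℝ} (hξ : ξ ∈ openCube K) (m : ℕ) :
    0 < Qm K ξ m :=
  Finset.prod_pos fun j _ => one_sub_pos' hξ j

lemma Qm_zero {K : ℕ} (ξ : Fin (K - 1) → ℝ) : Qm K ξ 0 = 1 := by
  rw [Qm]
  simp

lemma filter_lt_succ {K : ℕ} (m : ℕ) (hm : m < K - 1) :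
    Finset.univ.filter (fun j : Fin (K - 1) => (j : ℕ) < m + 1)
      = insert (⟨m, hm⟩ : Fin (K - 1))
          (Finset.univ.filter (fun j : Fin (K - 1) => (j : ℕ) < m)) := by
  ext j
  simp only [Finset.mem_filter, Finset.mem_insert, Finset.mem_univ, true_and, Fin.ext_iff]
  omega

lemma not_mem_filter_lt {K : ℕ} (m : ℕ) (hm : m < K - 1) :
    (⟨m, hm⟩ : Fin (K - 1)) ∉
      Finset.univ.filter (fun j : Fin (K - 1) => (j : ℕ) < m) := by
  simp

lemma Qm_succ {K : ℕ} (ξ : Fin (K - 1) → ℝ) (m : ℕ) (hm : m < K - 1) :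
    Qm K ξ (m + 1) = (1 - ξ ⟨m, hm⟩) * Qm K ξ m := by
  rw [Qm, Qm, filter_lt_succ m hm, Finset.prod_insert (not_mem_filter_lt m hm)]

lemma filter_lt_all {K : ℕ} :
    Finset.univ.filter (fun j : Fin (K - 1) => (j : ℕ) < K - 1) = Finset.univ := by
  ext j
  simp [j.isLt]

/-- Telescoping sum 1. -/
lemma tel1 {K : ℕ} {ξ : Fin (K - 1) → ℝ} (hξ : ξ ∈ openCube K) :
    ∀ m, m ≤ K - 1 →
      ∑ i ∈ Finset.univ.filter (fun i : Fin (K - 1) => (i : ℕ) < m),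
          ξ i / ((1 - ξ i) * SBP K ξ i) = 1 / Qm K ξ m - 1 := by
  intro m
  induction m with
  | zero => intro _; simp [Qm_zero]
  | succ m ih =>
    intro hm1
    have hm : m < K - 1 := hm1
    rw [filter_lt_succ m hm, Finset.sum_insert (not_mem_filter_lt m hm), ih (le_of_lt hm),
      Qm_succ ξ m hm, SBP_eq_Qm]
    have h1 : (1 : ℝ) - ξ ⟨m, hm⟩ ≠ 0 := (one_sub_pos' hξ _).ne'
    have h2 : Qm K ξ m ≠ 0 := (Qm_pos hξ m).ne'
    have h3 : Qm K ξ ((⟨m, hm⟩ : Fin (K - 1)) : ℕ) = Qm K ξ m := rfl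
    rw [h3]
    field_simp
    ring

lemma stickBreak_eq {K : ℕ} (ξ : Fin (K - 1) → ℝ) (l : Fin (K - 1)) :
    stickBreak K ξ l = ξ l * SBP K ξ l := rfl

/-- Telescoping sum for the total mass. -/
lemma telX {K : ℕ} (ξ : Fin (K - 1) → ℝ) :
    ∀ m, m ≤ K - 1 →
      ∑ i ∈ Finset.univ.filter (fun i : Fin (K - 1) => (i : ℕ) < m),
          stickBreak K ξ i = 1 - Qm K ξ m := by
  intro m
  induction m with
  | zero => intro _; simp [Qm_zero]
  | succ m ih =>
    intro hm1
    have hm : m < K - 1 := hm1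
    rw [filter_lt_succ m hm, Finset.sum_insert (not_mem_filter_lt m hm), ih (le_of_lt hm),
      Qm_succ ξ m hm, stickBreak_eq, SBP_eq_Qm]
    have h3 : Qm K ξ ((⟨m, hm⟩ : Fin (K - 1)) : ℕ) = Qm K ξ m := rfl
    rw [h3]
    ring

/-- `Θ_m` as a function of a natural number index. -/
def ThS (K : ℕ) (θ : Fin K → ℝ) (m : ℕ) : ℝ :=
  ∑ j ∈ Finset.univ.filter (fun j : Fin K => m ≤ (j : ℕ)), θ j

lemma ThetaGe_eq_ThS {K : ℕ} (θ : Fin K → ℝ) (i : Fin (K - 1)) :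
    ThetaGe K θ i = ThS K θ (i : ℕ) := rfl

lemma ThS_zero {K : ℕ} (θ : Fin K → ℝ) : ThS K θ 0 = thetaTot K θ := by
  rw [ThS, thetaTot]
  congr 1
  ext j
  simp

lemma ThS_succ {K : ℕ} (θ : Fin K → ℝ) (m : ℕ) (hm : m < K) :
    ThS K θ m = θ ⟨m, hm⟩ + ThS K θ (m + 1) := by
  have h : Finset.univ.filter (fun j : Fin K => m ≤ (j : ℕ))
      = insert (⟨m, hm⟩ : Fin K) (Finset.univ.filter (fun j : Fin K => m + 1 ≤ (j : ℕ))) := by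
    ext j
    simp only [Finset.mem_filter, Finset.mem_insert, Finset.mem_univ, true_and, Fin.ext_iff]
    omega
  rw [ThS, h, Finset.sum_insert (by simp)]
  rfl

/-- Telescoping sum 2 (drift coefficients). -/
lemma tel2 {K : ℕ} {ξ : Fin (K - 1) → ℝ} (hξ : ξ ∈ openCube K) (θ : Fin K → ℝ) :
    ∀ m, m ≤ K - 1 →
      ∑ i ∈ Finset.univ.filter (fun i : Fin (K - 1) => (i : ℕ) < m),
          (θ (idx K i) - ThetaGe K θ i * ξ i) / ((1 - ξ i) * SBP K ξ i)
        = thetaTot K θ - ThS K θ m / Qm K ξ m := by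
  intro m
  induction m with
  | zero => intro _; simp [Qm_zero, ThS_zero]
  | succ m ih =>
    intro hm1
    have hm : m < K - 1 := hm1
    have hmK : m < K := lt_of_lt_of_le hm (Nat.sub_le K 1)
    rw [filter_lt_succ m hm, Finset.sum_insert (not_mem_filter_lt m hm), ih (le_of_lt hm),
      Qm_succ ξ m hm, SBP_eq_Qm]
    have h1 : (1 : ℝ) - ξ ⟨m, hm⟩ ≠ 0 := (one_sub_pos' hξ _).ne'
    have h2 : Qm K ξ m ≠ 0 := (Qm_pos hξ m).ne'
    have h3 : Qm K ξ ((⟨m, hm⟩ : Fin (K - 1)) : ℕ) = Qm K ξ m := rfl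
    have h4 : θ (idx K (⟨m, hm⟩ : Fin (K - 1))) = θ ⟨m, hmK⟩ := by
      congr 1
    have h5 : ThetaGe K θ (⟨m, hm⟩ : Fin (K - 1)) = ThS K θ m := rfl
    have h6 : ThS K θ m = θ ⟨m, hmK⟩ + ThS K θ (m + 1) := ThS_succ θ m hmK
    rw [h3, h4, h5, h6]
    field_simp
    ring

lemma stickBreak_mem {K : ℕ} {ξ : Fin (K - 1) → ℝ} (hξ : ξ ∈ openCube K) :
    stickBreak K ξ ∈ simplexInt K := by
  constructor
  · intro i
    exact mul_pos (hξ i).1 (SBP_pos hξ i)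
  · have h := telX ξ (K - 1) le_rfl
    rw [filter_lt_all] at h
    rw [h]
    have := Qm_pos hξ (K - 1)
    linarith

lemma Vm_self {K : ℕ} (ξ : Fin (K - 1) → ℝ) (l : Fin (K - 1)) :
    Vm K ξ l l = SBP K ξ l := if_pos rfl

lemma Vm_gt {K : ℕ} (ξ : Fin (K - 1) → ℝ) {i l : Fin (K - 1)} (h : l < i) :
    Vm K ξ i l = 0 := by
  rw [Vm, if_neg (ne_of_gt h), if_neg (asymm h)]

lemma Vm_lt {K : ℕ} {ξ : Fin (K - 1) → ℝ} (hξ : ξ ∈ openCube K) {i l : Fin (K - 1)}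
    (h : i < l) :
    Vm K ξ i l = -(stickBreak K ξ l / (1 - ξ i)) := by
  rw [Vm, if_neg (ne_of_lt h), if_pos h]
  have hi : i ∈ Finset.univ.filter (fun j => j < l) := by simp [h]
  have hne : (1 : ℝ) - ξ i ≠ 0 := (one_sub_pos' hξ i).ne'
  have hprod : (1 - ξ i) * ∏ j ∈ (Finset.univ.filter (fun j => j < l)).erase i, (1 - ξ j)
      = SBP K ξ l := by
    rw [SBP]
    exact Finset.mul_prod_erase _ (fun j => (1 : ℝ) - ξ j) hi
  have h2 : (∏ j ∈ (Finset.univ.filter (fun j => j < l)).erase i, (1 - ξ j))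
      = SBP K ξ l / (1 - ξ i) := by
    field_simp
    linarith [hprod]
  rw [h2, stickBreak_eq, mul_div_assoc]

/-- Coefficient identity for the drift part. -/
lemma idB {K : ℕ} {ξ : Fin (K - 1) → ℝ} (hξ : ξ ∈ openCube K) (θ : Fin K → ℝ)
    (l : Fin (K - 1)) :
    ∑ i, ((θ (idx K i) - ThetaGe K θ i * ξ i) / SBP K ξ i) * Vm K ξ i l
      = θ (idx K l) - thetaTot K θ * stickBreak K ξ l := by
  classical
  rw [← Finset.sum_filter_add_sum_filter_not Finset.univ (fun i => i < l)]
  have h2 : ∑ i ∈ Finset.univ.filter (fun i => ¬ i < l),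
      ((θ (idx K i) - ThetaGe K θ i * ξ i) / SBP K ξ i) * Vm K ξ i l
      = ((θ (idx K l) - ThetaGe K θ l * ξ l) / SBP K ξ l) * SBP K ξ l := by
    have hsing : ∑ i ∈ Finset.univ.filter (fun i => ¬ i < l),
        ((θ (idx K i) - ThetaGe K θ i * ξ i) / SBP K ξ i) * Vm K ξ i l
        = ((θ (idx K l) - ThetaGe K θ l * ξ l) / SBP K ξ l) * Vm K ξ l l := by
      refine Finset.sum_eq_single_of_mem l (by simp) ?_
      intro b hb hbl
      have hlb : l < b := lt_of_le_of_ne (not_lt.1 (Finset.mem_filter.1 hb).2) (Ne.symm hbl)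
      rw [Vm_gt ξ hlb, mul_zero]
    rw [hsing, Vm_self]
  have h1 : ∑ i ∈ Finset.univ.filter (fun i => i < l),
      ((θ (idx K i) - ThetaGe K θ i * ξ i) / SBP K ξ i) * Vm K ξ i l
      = -(stickBreak K ξ l * (thetaTot K θ - ThS K θ (l : ℕ) / Qm K ξ (l : ℕ))) := by
    have hstep : ∑ i ∈ Finset.univ.filter (fun i => i < l),
        ((θ (idx K i) - ThetaGe K θ i * ξ i) / SBP K ξ i) * Vm K ξ i l
        = ∑ i ∈ Finset.univ.filter (fun i => i < l),
            -(stickBreak K ξ l) *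
              ((θ (idx K i) - ThetaGe K θ i * ξ i) / ((1 - ξ i) * SBP K ξ i)) := by
      refine Finset.sum_congr rfl fun i hi => ?_
      have hil : i < l := (Finset.mem_filter.1 hi).2
      rw [Vm_lt hξ hil]
      have hne1 : (1 : ℝ) - ξ i ≠ 0 := (one_sub_pos' hξ i).ne'
      have hne2 : SBP K ξ i ≠ 0 := (SBP_pos hξ i).ne'
      field_simp
    rw [hstep, ← Finset.mul_sum, ← filter_coe_lt l,
      tel2 hξ θ (l : ℕ) (le_of_lt l.isLt)]
    ring
  rw [h1, h2, ThetaGe_eq_ThS, SBP_eq_Qm, stickBreak_eq, SBP_eq_Qm]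
  have hne : Qm K ξ (l : ℕ) ≠ 0 := (Qm_pos hξ (l : ℕ)).ne'
  field_simp
  ring

/-- Coefficient identity for the diffusion part, case `l ≤ m`. -/
lemma idA_le {K : ℕ} {ξ : Fin (K - 1) → ℝ} (hξ : ξ ∈ openCube K) {l m : Fin (K - 1)}
    (hlm : l ≤ m) :
    ∑ i, (ξ i * (1 - ξ i) / SBP K ξ i) * (Vm K ξ i l * Vm K ξ i m)
      = stickBreak K ξ l * ((if l = m then 1 else 0) - stickBreak K ξ m) := by
  classical
  rw [← Finset.sum_filter_add_sum_filter_not Finset.univ (fun i => i < l)]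
  have h2 : ∑ i ∈ Finset.univ.filter (fun i => ¬ i < l),
      (ξ i * (1 - ξ i) / SBP K ξ i) * (Vm K ξ i l * Vm K ξ i m)
      = (ξ l * (1 - ξ l) / SBP K ξ l) * (SBP K ξ l * Vm K ξ l m) := by
    have hsing : ∑ i ∈ Finset.univ.filter (fun i => ¬ i < l),
        (ξ i * (1 - ξ i) / SBP K ξ i) * (Vm K ξ i l * Vm K ξ i m)
        = (ξ l * (1 - ξ l) / SBP K ξ l) * (Vm K ξ l l * Vm K ξ l m) := by
      refine Finset.sum_eq_single_of_mem l (by simp) ?_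
      intro b hb hbl
      have hlb : l < b := lt_of_le_of_ne (not_lt.1 (Finset.mem_filter.1 hb).2) (Ne.symm hbl)
      rw [Vm_gt ξ hlb, zero_mul, mul_zero]
    rw [hsing, Vm_self]
  have h1 : ∑ i ∈ Finset.univ.filter (fun i => i < l),
      (ξ i * (1 - ξ i) / SBP K ξ i) * (Vm K ξ i l * Vm K ξ i m)
      = (stickBreak K ξ l * stickBreak K ξ m) * (1 / Qm K ξ (l : ℕ) - 1) := by
    have hstep : ∑ i ∈ Finset.univ.filter (fun i => i < l),
        (ξ i * (1 - ξ i) / SBP K ξ i) * (Vm K ξ i l * Vm K ξ i m)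
        = ∑ i ∈ Finset.univ.filter (fun i => i < l),
            (stickBreak K ξ l * stickBreak K ξ m) * (ξ i / ((1 - ξ i) * SBP K ξ i)) := by
      refine Finset.sum_congr rfl fun i hi => ?_
      have hil : i < l := (Finset.mem_filter.1 hi).2
      have him : i < m := lt_of_lt_of_le hil hlm
      rw [Vm_lt hξ hil, Vm_lt hξ him]
      have hne1 : (1 : ℝ) - ξ i ≠ 0 := (one_sub_pos' hξ i).ne'
      have hne2 : SBP K ξ i ≠ 0 := (SBP_pos hξ i).ne'
      field_simp
    rw [hstep, ← Finset.mul_sum, ← filter_coe_lt l,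
      tel1 hξ (l : ℕ) (le_of_lt l.isLt)]
  rw [h1, h2]
  rcases eq_or_lt_of_le hlm with rfl | hlt
  · rw [if_pos rfl, Vm_self ξ l, stickBreak_eq, SBP_eq_Qm]
    have hne : Qm K ξ (l : ℕ) ≠ 0 := (Qm_pos hξ (l : ℕ)).ne'
    field_simp
    ring
  · rw [if_neg (ne_of_lt hlt), Vm_lt hξ hlt]
    have hne1 : (1 : ℝ) - ξ l ≠ 0 := (one_sub_pos' hξ l).ne'
    have hne : Qm K ξ (l : ℕ) ≠ 0 := (Qm_pos hξ (l : ℕ)).ne'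
    rw [stickBreak_eq ξ l, SBP_eq_Qm]
    field_simp
    ring

/-- Coefficient identity for the diffusion part. -/
lemma idA {K : ℕ} {ξ : Fin (K - 1) → ℝ} (hξ : ξ ∈ openCube K) (l m : Fin (K - 1)) :
    ∑ i, (ξ i * (1 - ξ i) / SBP K ξ i) * (Vm K ξ i l * Vm K ξ i m)
      = stickBreak K ξ l * ((if l = m then 1 else 0) - stickBreak K ξ m) := by
  rcases le_or_gt l m with h | h
  · exact idA_le hξ h
  · have hsym := idA_le hξ (le_of_lt h)
    calc ∑ i, (ξ i * (1 - ξ i) / SBP K ξ i) * (Vm K ξ i l * Vm K ξ i m)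
        = ∑ i, (ξ i * (1 - ξ i) / SBP K ξ i) * (Vm K ξ i m * Vm K ξ i l) := by
          refine Finset.sum_congr rfl fun i _ => ?_
          ring
      _ = stickBreak K ξ m * ((if m = l then 1 else 0) - stickBreak K ξ l) := hsym
      _ = stickBreak K ξ l * ((if l = m then 1 else 0) - stickBreak K ξ m) := by
          rw [if_neg (ne_of_gt h), if_neg (ne_of_lt h)]
          ring

lemma pd_def {K : ℕ} (g : (Fin (K - 1) → ℝ) → ℝ) (i : Fin (K - 1)) (x : Fin (K - 1) → ℝ) :
    pd K g i x = fderiv ℝ g x (Pi.single i 1) := rfl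

/-- First-order chain rule for the stick-breaking substitution. -/
lemma pd_comp {K : ℕ} {f : (Fin (K - 1) → ℝ) → ℝ} (hf : ContDiffOn ℝ 2 f (simplexInt K))
    {ζ : Fin (K - 1) → ℝ} (hζ : ζ ∈ openCube K) (i : Fin (K - 1)) :
    pd K (f ∘ stickBreak K) i ζ = ∑ l, Vm K ζ i l * pd K f l (stickBreak K ζ) := by
  have hmem := stickBreak_mem hζ
  have hfx : DifferentiableAt ℝ f (stickBreak K ζ) :=
    (hf.contDiffAt (isOpen_simplexInt.mem_nhds hmem)).differentiableAt (by norm_num)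
  have hT := hasFDerivAt_stickBreak (K := K) ζ
  have hcomp : fderiv ℝ (f ∘ stickBreak K) ζ =
      (fderiv ℝ f (stickBreak K ζ)).comp (Dmap K ζ) :=
    (hfx.hasFDerivAt.comp ζ hT).fderiv
  rw [pd_def, hcomp]
  rw [ContinuousLinearMap.comp_apply]
  rw [clm_apply_eq_sum]
  exact Finset.sum_congr rfl fun l _ => by rw [Dmap_single]; rfl

/-- Each Jacobian entry, as a function of `ζ`, is differentiable with vanishing derivative in
the direction `e_i`. -/
lemma Vm_hasFDerivAt {K : ℕ} (ξ : Fin (K - 1) → ℝ) (i l : Fin (K - 1)) :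
    ∃ W : (Fin (K - 1) → ℝ) →L[ℝ] ℝ,
      HasFDerivAt (fun ζ => Vm K ζ i l) W ξ ∧ W (Pi.single i 1) = 0 := by
  classical
  rcases eq_or_ne i l with rfl | hne
  · refine ⟨∑ j ∈ Finset.univ.filter (fun j => j < i),
      (∏ k ∈ (Finset.univ.filter (fun j => j < i)).erase j, (1 - ξ k)) •
        (-(ContinuousLinearMap.proj j : (Fin (K - 1) → ℝ) →L[ℝ] ℝ)), ?_, ?_⟩
    · have hfun : (fun ζ : Fin (K - 1) → ℝ => Vm K ζ i i)
          = fun ζ => ∏ j ∈ Finset.univ.filter (fun j => j < i), (1 - ζ j) := by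
        funext ζ
        rw [Vm, if_pos rfl, SBP]
      rw [hfun]
      exact HasFDerivAt.finset_prod fun j _ => (hasFDerivAt_apply j ξ).const_sub 1
    · simp only [ContinuousLinearMap.sum_apply, ContinuousLinearMap.smul_apply,
        ContinuousLinearMap.neg_apply, ContinuousLinearMap.proj_apply, smul_eq_mul]
      apply Finset.sum_eq_zero
      intro j hj
      have hji : j ≠ i := ne_of_lt (Finset.mem_filter.1 hj).2
      have h0 : (Pi.single i 1 : Fin (K - 1) → ℝ) j = 0 := by
        rw [Pi.single_apply, if_neg hji]
      rw [h0, neg_zero, mul_zero]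
  · by_cases hlt : i < l
    · refine ⟨-(ξ l • (∑ j ∈ (Finset.univ.filter (fun j : Fin (K - 1) => j < l)).erase i,
        (∏ k ∈ ((Finset.univ.filter (fun j : Fin (K - 1) => j < l)).erase i).erase j,
          (1 - ξ k)) • (-(ContinuousLinearMap.proj j : (Fin (K - 1) → ℝ) →L[ℝ] ℝ)))
        + (∏ j ∈ (Finset.univ.filter (fun j : Fin (K - 1) => j < l)).erase i, (1 - ξ j)) •
            (ContinuousLinearMap.proj l : (Fin (K - 1) → ℝ) →L[ℝ] ℝ)), ?_, ?_⟩
      · have hfun : (fun ζ : Fin (K - 1) → ℝ => Vm K ζ i l)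
            = fun ζ => -(ζ l * ∏ j ∈ (Finset.univ.filter (fun j : Fin (K - 1) => j < l)).erase i,
                (1 - ζ j)) := by
          funext ζ
          rw [Vm, if_neg hne, if_pos hlt]
        rw [hfun]
        have h1 : HasFDerivAt (fun ζ : Fin (K - 1) → ℝ => ζ l)
            (ContinuousLinearMap.proj l : (Fin (K - 1) → ℝ) →L[ℝ] ℝ) ξ :=
          (ContinuousLinearMap.proj l : (Fin (K - 1) → ℝ) →L[ℝ] ℝ).hasFDerivAt
        have h2 : HasFDerivAt (fun ζ : Fin (K - 1) → ℝ =>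
            ∏ j ∈ (Finset.univ.filter (fun j : Fin (K - 1) => j < l)).erase i, (1 - ζ j))
            (∑ j ∈ (Finset.univ.filter (fun j : Fin (K - 1) => j < l)).erase i,
              (∏ k ∈ ((Finset.univ.filter (fun j : Fin (K - 1) => j < l)).erase i).erase j,
                (1 - ξ k)) •
                (-(ContinuousLinearMap.proj j : (Fin (K - 1) → ℝ) →L[ℝ] ℝ))) ξ :=
          HasFDerivAt.finset_prod fun j _ => (hasFDerivAt_apply j ξ).const_sub 1
        exact (h1.mul h2).neg
      · simp only [ContinuousLinearMap.neg_apply, ContinuousLinearMap.add_apply,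
          ContinuousLinearMap.smul_apply, ContinuousLinearMap.sum_apply,
          ContinuousLinearMap.proj_apply, smul_eq_mul]
        have h0l : (Pi.single i 1 : Fin (K - 1) → ℝ) l = 0 := by
          rw [Pi.single_apply, if_neg (fun h => hne h.symm)]
        have hsum0 : ∑ x ∈ (Finset.univ.filter (fun j : Fin (K - 1) => j < l)).erase i,
            (∏ k ∈ ((Finset.univ.filter (fun j : Fin (K - 1) => j < l)).erase i).erase x,
              (1 - ξ k)) * -(Pi.single i 1 : Fin (K - 1) → ℝ) x = 0 := by
          apply Finset.sum_eq_zero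
          intro j hj
          have h0 : (Pi.single i 1 : Fin (K - 1) → ℝ) j = 0 := by
            rw [Pi.single_apply, if_neg (Finset.ne_of_mem_erase hj)]
          rw [h0, neg_zero, mul_zero]
        rw [hsum0, h0l]
        ring
    · refine ⟨0, ?_, by simp⟩
      have hfun : (fun ζ : Fin (K - 1) → ℝ => Vm K ζ i l) = fun _ => (0 : ℝ) := by
        funext ζ
        rw [Vm, if_neg hne, if_neg hlt]
      rw [hfun]
      exact hasFDerivAt_const 0 ξ

/-- Second-order chain rule for the stick-breaking substitution in a single direction. -/
lemma pd2_comp {K : ℕ} {f : (Fin (K - 1) → ℝ) → ℝ} (hf : ContDiffOn ℝ 2 f (simplexInt K))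
    {ξ : Fin (K - 1) → ℝ} (hξ : ξ ∈ openCube K) (i : Fin (K - 1)) :
    pd K (pd K (f ∘ stickBreak K) i) i ξ
      = ∑ l, Vm K ξ i l * ∑ m, Vm K ξ i m * pd K (pd K f l) m (stickBreak K ξ) := by
  classical
  have hmem := stickBreak_mem hξ
  have hfx : ContDiffAt ℝ 2 f (stickBreak K ξ) :=
    hf.contDiffAt (isOpen_simplexInt.mem_nhds hmem)
  have hD2 : DifferentiableAt ℝ (fderiv ℝ f) (stickBreak K ξ) :=
    (hfx.fderiv_right (m := 1) (by norm_num)).differentiableAt one_ne_zero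
  have hFl : ∀ l : Fin (K - 1), DifferentiableAt ℝ (pd K f l) (stickBreak K ξ) := by
    intro l
    have hEq : pd K f l
        = (fun L : (Fin (K - 1) → ℝ) →L[ℝ] ℝ => L (Pi.single l 1)) ∘ fderiv ℝ f := rfl
    rw [hEq]
    exact ((ContinuousLinearMap.apply ℝ ℝ (Pi.single l 1)).differentiableAt).comp
      (stickBreak K ξ) hD2
  set g : (Fin (K - 1) → ℝ) → ℝ :=
    fun ζ => ∑ l, Vm K ζ i l * pd K f l (stickBreak K ζ) with hgdef
  have hev : pd K (f ∘ stickBreak K) i =ᶠ[nhds ξ] g :=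
    Filter.eventuallyEq_of_mem (isOpen_openCube.mem_nhds hξ) fun ζ hζ => pd_comp hf hζ i
  have hfe : fderiv ℝ (pd K (f ∘ stickBreak K) i) ξ = fderiv ℝ g ξ := hev.fderiv_eq
  choose W hW hW0 using fun l => Vm_hasFDerivAt ξ i l
  have hFT : ∀ l, HasFDerivAt (fun ζ => pd K f l (stickBreak K ζ))
      ((fderiv ℝ (pd K f l) (stickBreak K ξ)).comp (Dmap K ξ)) ξ :=
    fun l => ((hFl l).hasFDerivAt).comp ξ (hasFDerivAt_stickBreak ξ)
  have hgl : ∀ l, HasFDerivAt (fun ζ => Vm K ζ i l * pd K f l (stickBreak K ζ))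
      ((Vm K ξ i l) • ((fderiv ℝ (pd K f l) (stickBreak K ξ)).comp (Dmap K ξ))
        + (pd K f l (stickBreak K ξ)) • W l) ξ :=
    fun l => (hW l).mul (hFT l)
  have hG : HasFDerivAt g
      (∑ l, ((Vm K ξ i l) • ((fderiv ℝ (pd K f l) (stickBreak K ξ)).comp (Dmap K ξ))
        + (pd K f l (stickBreak K ξ)) • W l)) ξ :=
    HasFDerivAt.fun_sum fun l _ => hgl l
  rw [pd_def, hfe, hG.fderiv]
  simp only [ContinuousLinearMap.sum_apply, ContinuousLinearMap.add_apply,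
    ContinuousLinearMap.smul_apply, ContinuousLinearMap.coe_comp', Function.comp_apply,
    smul_eq_mul]
  refine Finset.sum_congr rfl fun l _ => ?_
  rw [hW0 l, mul_zero, add_zero]
  congr 1
  rw [clm_apply_eq_sum]
  exact Finset.sum_congr rfl fun m _ => by rw [Dmap_single]; rfl

end StickBreakAux

/-- Appendix B Lemma: under the stick-breaking change of coordinates
`T(ξ)_i = ξ_i Π_{j<i}(1-ξ_j)`, the neutral generator `L_0` diagonalizes: for `f` twice
continuously differentiable on the interior of the simplex and `f̃ = f ∘ T`,
`(L_0 f)(T(ξ)) = (1/2) Σ_i [ξ_i(1-ξ_i)/Π_{k<i}(1-ξ_k)] ∂²f̃/∂ξ_i²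
 + (1/2) Σ_i [(θ_i - Θ_{i-1} ξ_i)/Π_{k<i}(1-ξ_k)] ∂f̃/∂ξ_i` on `(0,1)^{K-1}`,
with no mixed second-order partial derivatives. -/
theorem neutral_generator_stick_breaking (K : ℕ) (hK : 2 ≤ K) (θ : Fin K → ℝ)
    (hθ : ∀ i, 0 < θ i) (f : (Fin (K - 1) → ℝ) → ℝ)
    (hf : ContDiffOn ℝ 2 f (simplexInt K))
    (ξ : Fin (K - 1) → ℝ) (hξ : ξ ∈ openCube K) :
    L0 K θ f (stickBreak K ξ) =
      (1 / 2) * ∑ i,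
          (ξ i * (1 - ξ i) / ∏ k ∈ Finset.univ.filter (fun k => k < i), (1 - ξ k)) *
            pd K (pd K (f ∘ stickBreak K) i) i ξ +
        (1 / 2) * ∑ i,
          ((θ (idx K i) - ThetaGe K θ i * ξ i) /
              ∏ k ∈ Finset.univ.filter (fun k => k < i), (1 - ξ k)) *
            pd K (f ∘ stickBreak K) i ξ := by
  
  classical
  have e1 : ∀ i : Fin (K - 1), pd K (f ∘ stickBreak K) i ξ
      = ∑ l, Vm K ξ i l * pd K f l (stickBreak K ξ) := fun i => pd_comp hf hξ i
  have e2 : ∀ i : Fin (K - 1), pd K (pd K (f ∘ stickBreak K) i) i ξ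
      = ∑ l, Vm K ξ i l * ∑ m, Vm K ξ i m * pd K (pd K f l) m (stickBreak K ξ) :=
    fun i => pd2_comp hf hξ i
  have hSBP : ∀ i : Fin (K - 1),
      (∏ k ∈ Finset.univ.filter (fun k => k < i), (1 - ξ k)) = SBP K ξ i := fun _ => rfl
  have H2 : ∑ i, (ξ i * (1 - ξ i) / ∏ k ∈ Finset.univ.filter (fun k => k < i), (1 - ξ k)) *
        pd K (pd K (f ∘ stickBreak K) i) i ξ
      = ∑ i, ∑ j, stickBreak K ξ i * ((if i = j then (1 : ℝ) else 0) - stickBreak K ξ j) *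
          pd K (pd K f j) i (stickBreak K ξ) := by
    calc ∑ i, (ξ i * (1 - ξ i) / ∏ k ∈ Finset.univ.filter (fun k => k < i), (1 - ξ k)) *
          pd K (pd K (f ∘ stickBreak K) i) i ξ
        = ∑ i, ∑ l, ∑ m, (ξ i * (1 - ξ i) / SBP K ξ i) * (Vm K ξ i l * Vm K ξ i m)
            * pd K (pd K f l) m (stickBreak K ξ) := by
          refine Finset.sum_congr rfl fun i _ => ?_
          rw [hSBP i, e2 i, Finset.mul_sum]
          refine Finset.sum_congr rfl fun l _ => ?_
          rw [Finset.mul_sum, Finset.mul_sum]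
          refine Finset.sum_congr rfl fun m _ => ?_
          ring
      _ = ∑ l, ∑ m, (∑ i, (ξ i * (1 - ξ i) / SBP K ξ i) * (Vm K ξ i l * Vm K ξ i m))
            * pd K (pd K f l) m (stickBreak K ξ) := by
          rw [Finset.sum_comm]
          refine Finset.sum_congr rfl fun l _ => ?_
          rw [Finset.sum_comm]
          exact Finset.sum_congr rfl fun m _ => by rw [← Finset.sum_mul]
      _ = ∑ l, ∑ m, stickBreak K ξ l * ((if l = m then (1 : ℝ) else 0) - stickBreak K ξ m)
            * pd K (pd K f l) m (stickBreak K ξ) := by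
          refine Finset.sum_congr rfl fun l _ => Finset.sum_congr rfl fun m _ => ?_
          rw [idA hξ l m]
      _ = ∑ i, ∑ j, stickBreak K ξ i * ((if i = j then (1 : ℝ) else 0) - stickBreak K ξ j) *
            pd K (pd K f j) i (stickBreak K ξ) := by
          rw [Finset.sum_comm]
          refine Finset.sum_congr rfl fun i _ => Finset.sum_congr rfl fun j _ => ?_
          rcases eq_or_ne i j with rfl | hij
          · rfl
          · rw [if_neg (Ne.symm hij), if_neg hij]
            ring
  have H1 : ∑ i, ((θ (idx K i) - ThetaGe K θ i * ξ i) /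
          ∏ k ∈ Finset.univ.filter (fun k => k < i), (1 - ξ k)) *
        pd K (f ∘ stickBreak K) i ξ
      = ∑ i, (θ (idx K i) - thetaTot K θ * stickBreak K ξ i) *
          pd K f i (stickBreak K ξ) := by
    calc ∑ i, ((θ (idx K i) - ThetaGe K θ i * ξ i) /
            ∏ k ∈ Finset.univ.filter (fun k => k < i), (1 - ξ k)) *
          pd K (f ∘ stickBreak K) i ξ
        = ∑ i, ∑ l, ((θ (idx K i) - ThetaGe K θ i * ξ i) / SBP K ξ i) * Vm K ξ i l *
            pd K f l (stickBreak K ξ) := by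
          refine Finset.sum_congr rfl fun i _ => ?_
          rw [hSBP i, e1 i, Finset.mul_sum]
          refine Finset.sum_congr rfl fun l _ => ?_
          ring
      _ = ∑ l, (∑ i, ((θ (idx K i) - ThetaGe K θ i * ξ i) / SBP K ξ i) * Vm K ξ i l) *
            pd K f l (stickBreak K ξ) := by
          rw [Finset.sum_comm]
          exact Finset.sum_congr rfl fun l _ => by rw [← Finset.sum_mul]
      _ = ∑ l, (θ (idx K l) - thetaTot K θ * stickBreak K ξ l) *
            pd K f l (stickBreak K ξ) := by
          refine Finset.sum_congr rfl fun l _ => ?_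
          rw [idB hξ θ l]
  rw [H2, H1, L0]
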